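/- Let σ be a non-identity bijection and suppose contest c satisfies Σ_{c' ∈ C} min(|{i ∈ N_c : σ(i) ∈ N_{c'}}|, v_{c'}) ≤ v_c. Then for every feasible ballot β (i.e., |β ∩ N_{c'}| ≤ v_{c'} for all c'), contest c is not interpreted as overvoted under σ: |{i ∈ N_c : σ(i) ∈ β}| ≤ v_c. -/

import Mathlib

open Finset

variable {ι γ : Type*} [Fintype ι] [DecidableEq ι] [DecidableEq γ]

/-- A ballot `β` is feasible if, in every contest `c`, it selects at most `v c` candidates. -/
def feasibleBallot (con : ι → γ) (v : γ → ℕ) (β : Finset ι) : Prop :=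
  ∀ c : γ, (β.filter fun j => con j = c).card ≤ v c

/-- The tally of candidate `i` output by a machine whose candidate-to-target mapping is `σ`,
on the deck `β`. A ballot contributes iff it selects target `σ i` and the contest of `i`
is not interpreted as overvoted under `σ`. -/
def tally (con : ι → γ) (v : γ → ℕ) (σ : ι → ι) {B : ℕ}
    (β : Fin B → Finset ι) (i : ι) : ℕ :=
  (Finset.univ.filter fun b : Fin B => σ i ∈ β b ∧
    (Finset.univ.filter fun j : ι => con j = con i ∧ σ j ∈ β b).card ≤ v (con i)).card

/-- The number of ballots of the deck selecting the target of candidate `i`. -/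
def voteCount {B : ℕ} (β : Fin B → Finset ι) (i : ι) : ℕ :=
  (Finset.univ.filter fun b : Fin B => i ∈ β b).card

theorem no_overvote_of_small_inflow
    [Fintype γ] (con : ι → γ) (v : γ → ℕ)
    (σ : Equiv.Perm ι) (hσ : σ ≠ 1) (c : γ)
    (hsum : (∑ c' : γ, min
        (Finset.univ.filter fun i : ι => con i = c ∧ con (σ i) = c').card
        (v c')) ≤ v c)
    (β : Finset ι) (hβ : feasibleBallot con v β) :
    (Finset.univ.filter fun i : ι => con i = c ∧ σ i ∈ β).card ≤ v c := by
  classical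
  set S := Finset.univ.filter fun i : ι => con i = c ∧ σ i ∈ β with hS
  have hfib : S.card = ∑ c' : γ, (S.filter fun i => con (σ i) = c').card := by
    exact Finset.card_eq_sum_card_fiberwise (f := fun i => con (σ i)) (by intros; simp)
  rw [hfib]
  refine le_trans (Finset.sum_le_sum ?_) hsum
  intro c' _
  refine le_min ?_ ?_
  · apply Finset.card_le_card
    intro i hi
    simp only [hS, Finset.mem_filter] at hi ⊢
    exact ⟨hi.1.1, hi.1.2.1, hi.2⟩
  · calc (S.filter fun i => con (σ i) = c').card
        ≤ (β.filter fun j => con j = c').card := by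
          apply Finset.card_le_card_of_injOn (fun i => σ i)
          · intro i hi
            simp only [hS, Finset.mem_coe, Finset.mem_filter] at hi ⊢
            exact ⟨hi.1.2.2, hi.2⟩
          · intro a _ b _ h
            exact σ.injective h
    _ ≤ v c' := hβ c'
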